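/- In the knapsack setting with items indexed in nonincreasing density order, let G be the total value of the greedy prefix and let M = max_i v i be the largest single-item value. Then max(G, M) ≥ OPT/2; i.e., the greedy-based mechanism's allocation achieves at least 50% of the optimal welfare. -/

import Mathlib

/-- **Greedy-based knapsack mechanism achieves 50% of optimal welfare.**
In the knapsack setting with items indexed in nonincreasing density order, let `G`
be the total value of the greedy prefix (the largest prefix fitting in the knapsack)
and `M = max_i v i` the largest single-item value.  Then `max G M ≥ OPT/2`, i.e.,
for every feasible subset `S`, `max G M ≥ (∑ i in S, v i)/2`. -/
theorem greedy_knapsack_half_optimal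
    (n : ℕ) (hn : 1 ≤ n) (v w : Fin n → ℝ) (W : ℝ) (hW : 0 < W)
    (hv : ∀ i, 0 ≤ v i) (hw0 : ∀ i, 0 < w i) (hwW : ∀ i, w i ≤ W)
    (hdens : ∀ i j : Fin n, i ≤ j → v j / w j ≤ v i / w i)
    (k : ℕ) (hkn : k ≤ n)
    (hkfeas : ∑ i ∈ Finset.univ.filter (fun i : Fin n => (i : ℕ) < k), w i ≤ W)
    (hkmax : ∀ k', k' ≤ n →
      ∑ i ∈ Finset.univ.filter (fun i : Fin n => (i : ℕ) < k'), w i ≤ W → k' ≤ k)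
    (S : Finset (Fin n)) (hS : ∑ i ∈ S, w i ≤ W) :
    (∑ i ∈ S, v i) / 2 ≤
      max (∑ i ∈ Finset.univ.filter (fun i : Fin n => (i : ℕ) < k), v i)
        (Finset.univ.sup' ⟨⟨0, hn⟩, Finset.mem_univ _⟩ v) := by
  set P : Finset (Fin n) := Finset.univ.filter (fun i : Fin n => (i : ℕ) < k) with hP
  set G : ℝ := ∑ i ∈ P, v i with hG
  set M : ℝ := Finset.univ.sup' ⟨⟨0, hn⟩, Finset.mem_univ _⟩ v with hM
  have hGmax : G ≤ max G M := le_max_left _ _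
  have hMmax : M ≤ max G M := le_max_right _ _
  rcases eq_or_lt_of_le hkn with hk | hk
  · -- k = n : greedy takes everything
    have hPuniv : P = Finset.univ := by
      ext i
      simp only [hP, Finset.mem_filter, Finset.mem_univ, true_and, iff_true]
      omega
    have h1 : ∑ i ∈ S, v i ≤ G := by
      rw [hG, hPuniv]
      exact Finset.sum_le_sum_of_subset_of_nonneg (Finset.subset_univ S)
        (fun i _ _ => hv i)
    have h2 : 0 ≤ ∑ i ∈ S, v i := Finset.sum_nonneg fun i _ => hv i
    linarith
  · -- k < n
    set kk : Fin n := ⟨k, hk⟩ with hkk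
    have hnotfeas : ¬ (∑ i ∈ Finset.univ.filter (fun i : Fin n => (i : ℕ) < k + 1), w i ≤ W) := by
      intro h
      have := hkmax (k + 1) hk h
      omega
    have hfilt : Finset.univ.filter (fun i : Fin n => (i : ℕ) < k + 1) = insert kk P := by
      ext i
      simp only [Finset.mem_filter, Finset.mem_univ, true_and, Finset.mem_insert, hP]
      constructor
      · intro h
        rcases Nat.lt_succ_iff_lt_or_eq.mp h with h | h
        · exact Or.inr h
        · exact Or.inl (Fin.ext h)
      · rintro (rfl | h)
        · rw [hkk, Fin.val_mk]; omega
        · omega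
    have hkknotP : kk ∉ P := by simp [hP, hkk]
    have hsum1 : ∑ i ∈ Finset.univ.filter (fun i : Fin n => (i : ℕ) < k + 1), w i
        = w kk + ∑ i ∈ P, w i := by rw [hfilt, Finset.sum_insert hkknotP]
    have hover : W < w kk + ∑ i ∈ P, w i := by
      by_contra h
      exact hnotfeas (by linarith [hsum1])
    set c : ℝ := v kk / w kk with hc
    have hc0 : 0 ≤ c := div_nonneg (hv kk) (hw0 kk).le
    -- values in S \ P are bounded by c * w
    have hSP : ∑ i ∈ S \ P, v i ≤ c * ∑ i ∈ S \ P, w i := by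
      rw [Finset.mul_sum]
      apply Finset.sum_le_sum
      intro i hi
      have hiP : ¬ ((i : ℕ) < k) := by
        simp only [Finset.mem_sdiff, hP, Finset.mem_filter, Finset.mem_univ, true_and] at hi
        exact hi.2
      have hkle : kk ≤ i := Fin.le_def.mpr (le_of_not_gt hiP)
      have := hdens kk i hkle
      calc v i = (v i / w i) * w i := (div_mul_cancel₀ (v i) (ne_of_gt (hw0 i))).symm
        _ ≤ c * w i := mul_le_mul_of_nonneg_right this (hw0 i).le
    -- values in P \ S are at least c * w
    have hPS : c * ∑ i ∈ P \ S, w i ≤ ∑ i ∈ P \ S, v i := by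
      rw [Finset.mul_sum]
      apply Finset.sum_le_sum
      intro i hi
      have hiP : (i : ℕ) < k := by
        simp only [Finset.mem_sdiff, hP, Finset.mem_filter, Finset.mem_univ, true_and] at hi
        exact hi.1
      have hile : i ≤ kk := Fin.le_def.mpr (le_of_lt hiP)
      have := hdens i kk hile
      calc c * w i ≤ (v i / w i) * w i := mul_le_mul_of_nonneg_right this (hw0 i).le
        _ = v i := div_mul_cancel₀ (v i) (ne_of_gt (hw0 i))
    have hsplitSv : ∑ i ∈ S, v i = ∑ i ∈ S ∩ P, v i + ∑ i ∈ S \ P, v i :=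
      (Finset.sum_inter_add_sum_sdiff S P v).symm
    have hsplitSw : ∑ i ∈ S, w i = ∑ i ∈ S ∩ P, w i + ∑ i ∈ S \ P, w i :=
      (Finset.sum_inter_add_sum_sdiff S P w).symm
    have hsplitPv : G = ∑ i ∈ P ∩ S, v i + ∑ i ∈ P \ S, v i :=
      (Finset.sum_inter_add_sum_sdiff P S v).symm
    have hsplitPw : ∑ i ∈ P, w i = ∑ i ∈ P ∩ S, w i + ∑ i ∈ P \ S, w i :=
      (Finset.sum_inter_add_sum_sdiff P S w).symm
    have hinterv : ∑ i ∈ S ∩ P, v i = ∑ i ∈ P ∩ S, v i := by rw [Finset.inter_comm]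
    have hinterw : ∑ i ∈ S ∩ P, w i = ∑ i ∈ P ∩ S, w i := by rw [Finset.inter_comm]
    have hcw : c * w kk = v kk := by rw [hc]; exact div_mul_cancel₀ (v kk) (ne_of_gt (hw0 kk))
    -- weight bound: ∑_{S\P} w ≤ w kk + ∑_{P\S} w
    have hwbound : ∑ i ∈ S \ P, w i ≤ w kk + ∑ i ∈ P \ S, w i := by
      have hSw : ∑ i ∈ S ∩ P, w i + ∑ i ∈ S \ P, w i ≤ W := hsplitSw ▸ hS
      have h0 : 0 ≤ ∑ i ∈ S ∩ P, w i :=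
        Finset.sum_nonneg fun i _ => (hw0 i).le
      nlinarith [hover, hsplitPw, hinterw]
    have hMkk : v kk ≤ M := Finset.le_sup' v (Finset.mem_univ kk)
    have hkey : ∑ i ∈ S, v i ≤ G + v kk := by
      have h1 : c * ∑ i ∈ S \ P, w i ≤ c * (w kk + ∑ i ∈ P \ S, w i) :=
        mul_le_mul_of_nonneg_left hwbound hc0
      have h2 : c * (w kk + ∑ i ∈ P \ S, w i) = v kk + c * ∑ i ∈ P \ S, w i := by
        rw [mul_add, hcw]
      linarith [hSP, hPS, hsplitSv, hsplitPv, hinterv]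
    linarith
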